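/- Let F be an algebraically closed field of characteristic zero, let V be an F-vector space, let S ⊆ V be a spanning subset, and let φ : V → Ten_F(m,k) be an F-linear map. Fix an integer q ≥ 1, F[ε]-submodules U_1,…,U_N of Ten_{F[ε]}(m,k) = (F[ε]^m)^{⊗k}, and set U = U_1 + ⋯ + U_N. Suppose that every φ(s) with s ∈ S degenerates to U with order q, i.e., ε^{q−1}·φ(s) = T_1 + ε^q·T_2 for some T_1 ∈ U and T_2 ∈ Ten_{F[ε]}(m,k). Suppose moreover that for each i every element of U_i is a sum of at most r_i simple F[ε]-tensors. Then every φ(v) with v ∈ V degenerates to U with order q, and consequently brk(φ(v)) ≤ r_1 + ⋯ + r_N for every v ∈ V. -/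

import Mathlib

open scoped TensorProduct
open PiTensorProduct

/-- The tensor rank over a commutative (semi)ring `R` of `T ∈ (R^m)^{⊗k}`:
the least `r` such that `T` is a sum of `r` simple tensors. -/
noncomputable def trkR {R : Type*} [CommSemiring R] {m k : ℕ}
    (T : ⨂[R] _ : Fin k, (Fin m → R)) : ℕ :=
  sInf {r : ℕ | ∃ v : Fin r → Fin k → Fin m → R, T = ∑ i, ⨂ₜ[R] j, v i j}

/-- Coordinate functional of `(R^m)^{⊗k}` at the multi-index `f : Fin k → Fin m`. -/
noncomputable def tcoord {R : Type*} [CommSemiring R] {m k : ℕ} (f : Fin k → Fin m) :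
    (⨂[R] _ : Fin k, (Fin m → R)) →ₗ[R] R :=
  PiTensorProduct.lift
    ((MultilinearMap.mkPiAlgebra R (Fin k) R).compLinearMap fun j => LinearMap.proj (f j))

/-- `T ∈ Ten_F(m,k)` has border rank at most `r`: every polynomial in the tensor
coordinates that vanishes on all tensors of rank at most `r` also vanishes at `T`. -/
def brkLE {F : Type*} [Field F] {m k : ℕ}
    (T : ⨂[F] _ : Fin k, (Fin m → F)) (r : ℕ) : Prop :=
  ∀ P : MvPolynomial (Fin k → Fin m) F,
    (∀ T' : ⨂[F] _ : Fin k, (Fin m → F), trkR T' ≤ r →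
      MvPolynomial.eval (fun f => tcoord f T') P = 0) →
    MvPolynomial.eval (fun f => tcoord f T) P = 0

/-- The canonical inclusion `Ten_F(m,k) → Ten_{F[ε]}(m,k)` induced by `F ⊆ F[ε]`,
written out in coordinates. -/
noncomputable def incl {F : Type*} [Field F] {m k : ℕ}
    (T : ⨂[F] _ : Fin k, (Fin m → F)) :
    ⨂[Polynomial F] _ : Fin k, (Fin m → Polynomial F) :=
  ∑ f : Fin k → Fin m, Polynomial.C (tcoord f T) •
    ⨂ₜ[Polynomial F] j, (Pi.single (f j) 1 : Fin m → Polynomial F)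

section AuxCoord

variable {R : Type*} [CommRing R] {m k : ℕ}

/-- basis tensor -/
noncomputable def ebasis (f : Fin k → Fin m) : ⨂[R] _ : Fin k, (Fin m → R) :=
  ⨂ₜ[R] j, (Pi.single (f j) 1 : Fin m → R)

theorem tcoord_tprod (f : Fin k → Fin m) (p : Fin k → Fin m → R) :
    tcoord f (⨂ₜ[R] j, p j) = ∏ j, p j (f j) := by
  simp [tcoord]

theorem tcoord_ebasis (f g : Fin k → Fin m) :
    tcoord f (ebasis g : ⨂[R] _ : Fin k, (Fin m → R)) = if f = g then 1 else 0 := by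
  rw [ebasis, tcoord_tprod]
  by_cases h : f = g
  · subst h; simp
  · rw [if_neg h]
    obtain ⟨j, hj⟩ := Function.ne_iff.mp h
    exact Finset.prod_eq_zero (Finset.mem_univ j) (by simp [Pi.single_apply, hj])

theorem tprod_eq_sum_ebasis (p : Fin k → Fin m → R) :
    (⨂ₜ[R] j, p j) = ∑ f : Fin k → Fin m, (∏ j, p j (f j)) • ebasis f := by
  classical
  have h1 : p = fun j => ∑ x : Fin m, p j x • (Pi.single x (1 : R) : Fin m → R) := by
    funext j y
    simp [Pi.single_apply, Finset.sum_ite_eq]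
  calc (⨂ₜ[R] j, p j)
      = (PiTensorProduct.tprod R)
          (fun j => ∑ x : Fin m, p j x • (Pi.single x (1 : R) : Fin m → R)) := by
        rw [← h1]
    _ = ∑ f : Fin k → Fin m,
          (PiTensorProduct.tprod R)
            (fun j => p j (f j) • (Pi.single (f j) (1 : R) : Fin m → R)) :=
        MultilinearMap.map_sum _ _
    _ = _ := Finset.sum_congr rfl fun f _ => MultilinearMap.map_smul_univ _ _ _

theorem eq_sum_tcoord (T : ⨂[R] _ : Fin k, (Fin m → R)) :
    T = ∑ f : Fin k → Fin m, tcoord f T • (ebasis f : ⨂[R] _ : Fin k, (Fin m → R)) := by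
  classical
  induction T using PiTensorProduct.induction_on with
  | smul_tprod c p =>
      have h1 : ∀ f : Fin k → Fin m,
          tcoord f (c • (⨂ₜ[R] j, p j)) • (ebasis f : ⨂[R] _ : Fin k, (Fin m → R))
            = c • ((∏ j, p j (f j)) • ebasis f) := by
        intro f
        rw [map_smul, tcoord_tprod, smul_eq_mul, mul_smul]
      rw [Finset.sum_congr rfl fun f _ => h1 f, ← Finset.smul_sum, ← tprod_eq_sum_ebasis]
  | add x y hx hy =>
      simp only [map_add, add_smul, Finset.sum_add_distrib]
      rw [← hx, ← hy]

theorem tensor_ext_tcoord {T T' : ⨂[R] _ : Fin k, (Fin m → R)}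
    (h : ∀ f, tcoord f T = tcoord f T') : T = T' := by
  rw [eq_sum_tcoord T, eq_sum_tcoord T']
  exact Finset.sum_congr rfl fun f _ => by rw [h f]

theorem smul_tprod_eq_tprod_update (hk : 0 < k) (c : R) (p : Fin k → Fin m → R) :
    c • (⨂ₜ[R] j, p j)
      = ⨂ₜ[R] j, Function.update p ⟨0, hk⟩ (c • p ⟨0, hk⟩) j := by
  classical
  have h := (PiTensorProduct.tprod R (s := fun _ : Fin k => Fin m → R)).map_update_smul
    p ⟨0, hk⟩ c (p ⟨0, hk⟩)
  rw [Function.update_eq_self] at h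
  exact h.symm

theorem trkR_le_of_repr {r : ℕ} {T : ⨂[R] _ : Fin k, (Fin m → R)}
    (v : Fin r → Fin k → Fin m → R) (h : T = ∑ i, ⨂ₜ[R] j, v i j) : trkR T ≤ r :=
  Nat.sInf_le ⟨v, h⟩

theorem exists_repr_card (hk : 0 < k) (T : ⨂[R] _ : Fin k, (Fin m → R)) :
    ∃ r : ℕ, ∃ v : Fin r → Fin k → Fin m → R, T = ∑ i, ⨂ₜ[R] j, v i j := by
  classical
  let e := Fintype.equivFin (Fin k → Fin m)
  refine ⟨Fintype.card (Fin k → Fin m), fun i =>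
    Function.update (fun j => (Pi.single ((e.symm i) j) 1 : Fin m → R)) ⟨0, hk⟩
      (tcoord (e.symm i) T • (Pi.single ((e.symm i) ⟨0, hk⟩) 1 : Fin m → R)), ?_⟩
  have h1 : ∀ i, (⨂ₜ[R] j,
      Function.update (fun j => (Pi.single ((e.symm i) j) 1 : Fin m → R)) ⟨0, hk⟩
        (tcoord (e.symm i) T • (Pi.single ((e.symm i) ⟨0, hk⟩) 1 : Fin m → R)) j)
      = tcoord (e.symm i) T • (ebasis (e.symm i) : ⨂[R] _ : Fin k, (Fin m → R)) := by
    intro i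
    rw [← smul_tprod_eq_tprod_update hk]
    rfl
  rw [Finset.sum_congr rfl fun i _ => h1 i,
    Equiv.sum_comp e.symm (fun f => tcoord f T • (ebasis f : ⨂[R] _ : Fin k, (Fin m → R)))]
  exact eq_sum_tcoord T

theorem repr_pad (hk : 0 < k) {s r' : ℕ} (hsr : s ≤ r') (v : Fin s → Fin k → Fin m → R) :
    ∃ w : Fin r' → Fin k → Fin m → R,
      (∑ i, ⨂ₜ[R] j, v i j) = ∑ i, ⨂ₜ[R] j, w i j := by
  classical
  refine ⟨fun i => if h : (i : ℕ) < s then v ⟨i, h⟩ else fun _ _ => 0, ?_⟩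
  set g : ℕ → ⨂[R] _ : Fin k, (Fin m → R) :=
    fun n => if h : n < s then (⨂ₜ[R] j, v ⟨n, h⟩ j) else 0 with hg
  have key : ∀ i : Fin r',
      (⨂ₜ[R] j, (if h : (i : ℕ) < s then v ⟨i, h⟩ else fun _ _ => 0) j) = g i := by
    intro i
    by_cases h : (i : ℕ) < s
    · simp only [hg, dif_pos h]
    · simp only [hg, dif_neg h]
      exact MultilinearMap.map_coord_zero _ ⟨0, hk⟩ rfl
  have key2 : ∀ i : Fin s, (⨂ₜ[R] j, v i j) = g i := by
    intro i
    simp only [hg, dif_pos i.isLt]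
  rw [Finset.sum_congr rfl fun i _ => key2 i, Finset.sum_congr rfl fun i _ => key i,
    Fin.sum_univ_eq_sum_range g s, Fin.sum_univ_eq_sum_range g r']
  exact Finset.sum_subset (Finset.range_subset_range.mpr hsr)
    (fun x _ hx => by rw [hg]; exact dif_neg (by simpa using hx))

theorem trkR_smul_le (hk : 0 < k) (c : R) {T : ⨂[R] _ : Fin k, (Fin m → R)} {r' : ℕ}
    (v : Fin r' → Fin k → Fin m → R) (h : T = ∑ i, ⨂ₜ[R] j, v i j) :
    trkR (c • T) ≤ r' := by
  apply trkR_le_of_repr (fun i => Function.update (v i) ⟨0, hk⟩ (c • v i ⟨0, hk⟩))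
  rw [h, Finset.smul_sum]
  exact Finset.sum_congr rfl fun i _ => smul_tprod_eq_tprod_update hk c (v i)

theorem repr_of_trkR_le (hk : 0 < k) {T : ⨂[R] _ : Fin k, (Fin m → R)} {r' : ℕ}
    (h : trkR T ≤ r') :
    ∃ v : Fin r' → Fin k → Fin m → R, T = ∑ i, ⨂ₜ[R] j, v i j := by
  obtain ⟨s, vs, hvs⟩ := exists_repr_card hk T
  have hne : {r0 : ℕ | ∃ v : Fin r0 → Fin k → Fin m → R, T = ∑ i, ⨂ₜ[R] j, v i j}.Nonempty :=
    ⟨s, vs, hvs⟩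
  obtain ⟨v0, hv0⟩ := Nat.sInf_mem hne
  obtain ⟨w, hw⟩ := repr_pad hk (h : sInf _ ≤ r') v0
  exact ⟨w, hv0.trans hw⟩

theorem repr_add {a b : ℕ} (v : Fin a → Fin k → Fin m → R) (w : Fin b → Fin k → Fin m → R) :
    (∑ i, ⨂ₜ[R] j, v i j) + (∑ i, ⨂ₜ[R] j, w i j)
      = ∑ i : Fin (a + b), ⨂ₜ[R] j, Fin.append v w i j := by
  rw [Fin.sum_univ_add (f := fun i : Fin (a + b) => ⨂ₜ[R] j, Fin.append v w i j)]
  simp [Fin.append_left, Fin.append_right]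

theorem repr_sum {ι : Type*} [DecidableEq ι] (t : Finset ι)
    (u : ι → ⨂[R] _ : Fin k, (Fin m → R)) (ρ : ι → ℕ)
    (h : ∀ i ∈ t, ∃ v : Fin (ρ i) → Fin k → Fin m → R, u i = ∑ a, ⨂ₜ[R] j, v a j) :
    ∃ v : Fin (∑ i ∈ t, ρ i) → Fin k → Fin m → R,
      (∑ i ∈ t, u i) = ∑ a, ⨂ₜ[R] j, v a j := by
  induction t using Finset.induction_on with
  | empty =>
      haveI : IsEmpty (Fin (∑ i ∈ (∅ : Finset ι), ρ i)) := by
        rw [Finset.sum_empty]; infer_instance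
      exact ⟨Fin.elim0, by simp only [Finset.sum_empty]; exact (Fintype.sum_empty _).symm⟩
  | @insert i t hit ih =>
      obtain ⟨v1, hv1⟩ := h i (Finset.mem_insert_self i t)
      obtain ⟨v2, hv2⟩ := ih fun j hj => h j (Finset.mem_insert_of_mem hj)
      rw [Finset.sum_insert hit, Finset.sum_insert hit]
      exact ⟨Fin.append v1 v2, by rw [hv1, hv2, repr_add]⟩

end AuxCoord

section AuxSubmodule

theorem mem_submodule_finset_sum {R M ι : Type*} [CommRing R] [AddCommGroup M] [Module R M]
    [DecidableEq ι] (t : Finset ι) (p : ι → Submodule R M) {x : M}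
    (hx : x ∈ ∑ i ∈ t, p i) :
    ∃ c : ι → M, (∀ i ∈ t, c i ∈ p i) ∧ x = ∑ i ∈ t, c i := by
  induction t using Finset.induction_on generalizing x with
  | empty => exact ⟨fun _ => 0, by simp, by simpa using hx⟩
  | @insert a t hat ih =>
      rw [Finset.sum_insert hat, Submodule.add_eq_sup] at hx
      obtain ⟨y, hy, z, hz, rfl⟩ := Submodule.mem_sup.mp hx
      obtain ⟨c, hc1, rfl⟩ := ih hz
      refine ⟨Function.update c a y, ?_, ?_⟩
      · intro i hi
        rcases Finset.mem_insert.mp hi with h | h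
        · subst h; rw [Function.update_self]; exact hy
        · rw [Function.update_of_ne (by rintro rfl; exact hat h)]; exact hc1 i h
      · rw [Finset.sum_insert hat, Function.update_self]
        congr 1
        exact Finset.sum_congr rfl fun i hi =>
          (Function.update_of_ne (by rintro rfl; exact hat hi) _ _).symm

end AuxSubmodule

section AuxIncl

variable {F : Type*} [Field F] {m k : ℕ}

theorem tcoord_incl (T : ⨂[F] _ : Fin k, (Fin m → F)) (f : Fin k → Fin m) :
    tcoord f (incl T) = Polynomial.C (tcoord f T) := by
  classical
  rw [incl, map_sum]
  have h1 : ∀ g : Fin k → Fin m,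
      tcoord f (Polynomial.C (tcoord g T) •
          ⨂ₜ[Polynomial F] j, (Pi.single (g j) 1 : Fin m → Polynomial F))
        = if f = g then Polynomial.C (tcoord g T) else 0 := by
    intro g
    rw [map_smul, show (⨂ₜ[Polynomial F] j, (Pi.single (g j) 1 : Fin m → Polynomial F))
        = (ebasis g : ⨂[Polynomial F] _ : Fin k, (Fin m → Polynomial F)) from rfl,
      tcoord_ebasis]
    split_ifs <;> simp
  rw [Finset.sum_congr rfl fun g _ => h1 g, Finset.sum_ite_eq]
  simp

theorem incl_add (A B : ⨂[F] _ : Fin k, (Fin m → F)) :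
    incl (A + B) = incl A + incl B :=
  tensor_ext_tcoord fun f => by simp [tcoord_incl, map_add]

theorem incl_zero : incl (0 : ⨂[F] _ : Fin k, (Fin m → F)) = 0 :=
  tensor_ext_tcoord fun f => by simp [tcoord_incl]

theorem incl_smul (a : F) (A : ⨂[F] _ : Fin k, (Fin m → F)) :
    incl (a • A) = Polynomial.C a • incl A :=
  tensor_ext_tcoord fun f => by
    simp [tcoord_incl, map_smul, smul_eq_mul, Polynomial.C_mul]

end AuxIncl

theorem eval_aeval_mv {F : Type*} [Field F] {σ : Type*}
    (P : MvPolynomial σ F) (g : σ → Polynomial F) (a : F) :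
    Polynomial.eval a (MvPolynomial.aeval g P)
      = MvPolynomial.eval (fun s => Polynomial.eval a (g s)) P := by
  have h : (Polynomial.evalRingHom a).comp (algebraMap F (Polynomial F)) = RingHom.id F := by
    ext x; simp
  rw [MvPolynomial.aeval_def, ← Polynomial.coe_evalRingHom, MvPolynomial.eval₂_comp_left, h]
  rfl

theorem degeneration_to_submodules_bounds_border_rank
    {F : Type*} [Field F] [IsAlgClosed F] [CharZero F]
    {V : Type*} [AddCommGroup V] [Module F V]
    (S : Set V) (hS : Submodule.span F S = ⊤)
    {m k : ℕ}
    (φ : V →ₗ[F] ⨂[F] _ : Fin k, (Fin m → F))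
    (q : ℕ) (hq : 1 ≤ q) (N : ℕ)
    (U : Fin N →
      Submodule (Polynomial F) (⨂[Polynomial F] _ : Fin k, (Fin m → Polynomial F)))
    (r : Fin N → ℕ)
    (hdeg : ∀ s ∈ S, ∃ T₁ ∈ ∑ i, U i,
      ∃ T₂ : ⨂[Polynomial F] _ : Fin k, (Fin m → Polynomial F),
        (Polynomial.X : Polynomial F) ^ (q - 1) • incl (φ s)
          = T₁ + (Polynomial.X : Polynomial F) ^ q • T₂)
    (hU : ∀ i, ∀ u ∈ U i, trkR u ≤ r i) :
    (∀ v : V, ∃ T₁ ∈ ∑ i, U i,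
      ∃ T₂ : ⨂[Polynomial F] _ : Fin k, (Fin m → Polynomial F),
        (Polynomial.X : Polynomial F) ^ (q - 1) • incl (φ v)
          = T₁ + (Polynomial.X : Polynomial F) ^ q • T₂) ∧
    (∀ v : V, brkLE (φ v) (∑ i, r i)) := by
  classical
  -- Part 1: degeneration for all v, by span induction
  have key : ∀ v : V, ∃ T₁ ∈ ∑ i, U i,
      ∃ T₂ : ⨂[Polynomial F] _ : Fin k, (Fin m → Polynomial F),
        (Polynomial.X : Polynomial F) ^ (q - 1) • incl (φ v)
          = T₁ + (Polynomial.X : Polynomial F) ^ q • T₂ := by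
    intro v
    have hv : v ∈ Submodule.span F S := by rw [hS]; exact Submodule.mem_top
    induction hv using Submodule.span_induction with
    | mem x hx => exact hdeg x hx
    | zero =>
        exact ⟨0, Submodule.zero_mem _, 0, by simp [map_zero, incl_zero]⟩
    | add x y hx hy ihx ihy =>
        obtain ⟨A₁, hA₁, A₂, hA⟩ := ihx
        obtain ⟨B₁, hB₁, B₂, hB⟩ := ihy
        refine ⟨A₁ + B₁, Submodule.add_mem _ hA₁ hB₁, A₂ + B₂, ?_⟩
        rw [map_add, incl_add, smul_add, hA, hB, smul_add]
        abel
    | smul a x hx ih =>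
        obtain ⟨A₁, hA₁, A₂, hA⟩ := ih
        refine ⟨Polynomial.C a • A₁, Submodule.smul_mem _ _ hA₁, Polynomial.C a • A₂, ?_⟩
        rw [map_smul, incl_smul,
          smul_comm ((Polynomial.X : Polynomial F) ^ (q - 1)) (Polynomial.C a), hA, smul_add,
          smul_comm (Polynomial.C a) ((Polynomial.X : Polynomial F) ^ q)]
  refine ⟨key, ?_⟩
  intro v P hP
  by_cases hk : 0 < k
  · -- main case k ≥ 1
    obtain ⟨T₁, hT₁mem, T₂, heq⟩ := key v
    obtain ⟨c0, hc0mem, hc0⟩ := mem_submodule_finset_sum Finset.univ U hT₁mem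
    have hrepr : ∀ i ∈ Finset.univ, ∃ v0 : Fin (r i) → Fin k → Fin m → Polynomial F,
        c0 i = ∑ a, ⨂ₜ[Polynomial F] j, v0 a j := fun i _ =>
      repr_of_trkR_le hk (hU i (c0 i) (hc0mem i (Finset.mem_univ i)))
    obtain ⟨w, hw⟩ := repr_sum Finset.univ c0 r hrepr
    rw [← hc0] at hw
    -- coordinates
    have hcoord : ∀ f, tcoord f T₁
        = Polynomial.X ^ (q - 1)
            * (Polynomial.C (tcoord f (φ v)) - Polynomial.X * tcoord f T₂) := by
      intro f
      have h := congrArg (tcoord f) heq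
      rw [map_smul, tcoord_incl, map_add, map_smul, smul_eq_mul, smul_eq_mul] at h
      have hX : (Polynomial.X : Polynomial F) ^ q
          = Polynomial.X ^ (q - 1) * Polynomial.X := by
        rw [← pow_succ]
        congr 1
        omega
      rw [hX] at h
      linear_combination -h
    set Q : Polynomial F :=
      MvPolynomial.aeval
        (fun f => Polynomial.C (tcoord f (φ v)) - Polynomial.X * tcoord f T₂) P with hQdef
    have hroot : ∀ a : F, a ≠ 0 → Polynomial.IsRoot Q a := by
      intro a ha
      -- evaluated tensor
      set W : ⨂[F] _ : Fin k, (Fin m → F) :=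
        ∑ i, ⨂ₜ[F] j, (fun x => Polynomial.eval a (w i j x)) with hW
      have hcoordW : ∀ f, tcoord f W = Polynomial.eval a (tcoord f T₁) := by
        intro f
        rw [hW, map_sum, hw, map_sum, Polynomial.eval_finset_sum]
        refine Finset.sum_congr rfl fun i _ => ?_
        rw [tcoord_tprod, tcoord_tprod, Polynomial.eval_prod]
      set W' : ⨂[F] _ : Fin k, (Fin m → F) := (a⁻¹) ^ (q - 1) • W with hW'
      have hrk : trkR W' ≤ ∑ i, r i :=
        trkR_smul_le hk _ (fun i j x => Polynomial.eval a (w i j x)) rfl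
      have hPW := hP W' hrk
      have hcoordW' : ∀ f, tcoord f W'
          = tcoord f (φ v) - a * Polynomial.eval a (tcoord f T₂) := by
        intro f
        rw [hW', map_smul, hcoordW f, hcoord f, smul_eq_mul]
        rw [Polynomial.eval_mul, Polynomial.eval_pow, Polynomial.eval_X]
        rw [← mul_assoc, ← mul_pow, inv_mul_cancel₀ ha, one_pow, one_mul]
        simp
      have : (fun f => tcoord f W') = fun f => Polynomial.eval a
          (Polynomial.C (tcoord f (φ v)) - Polynomial.X * tcoord f T₂) := by
        funext f
        rw [hcoordW' f]
        simp
      rw [Polynomial.IsRoot, hQdef, eval_aeval_mv, ← this, hPW]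
    have hQ0 : Q = 0 := by
      apply Polynomial.eq_zero_of_infinite_isRoot
      apply Set.Infinite.mono (s := {a : F | a ≠ 0})
      · intro a ha; exact hroot a ha
      · exact Set.Finite.infinite_compl (Set.finite_singleton 0)
    have h0 := congrArg (Polynomial.eval 0) hQ0
    rw [eval_aeval_mv, Polynomial.eval_zero] at h0
    have : (fun f => Polynomial.eval 0
          (Polynomial.C (tcoord f (φ v)) - Polynomial.X * tcoord f T₂))
        = fun f => tcoord f (φ v) := by
      funext f
      simp
    rw [this] at h0
    exact h0
  · -- degenerate case k = 0
    have hk0 : k = 0 := by omega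
    subst hk0
    set oneT : ⨂[F] _ : Fin 0, (Fin m → F) := ⨂ₜ[F] j, (0 : Fin m → F) with honeT
    set L := (PiTensorProduct.isEmptyEquiv (Fin 0) :
      (⨂[F] _ : Fin 0, (Fin m → F)) ≃ₗ[F] F) with hL
    have hnotnat : ∀ n r0 : ℕ, ((n : F) + 2⁻¹) ≠ (r0 : F) := by
      intro n r0 h
      have h2 : (2 : F) ≠ 0 := two_ne_zero
      have h' : (2 : F) * ((n : F) + 2⁻¹) = 2 * (r0 : F) := by rw [h]
      rw [mul_add, mul_inv_cancel₀ h2] at h'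
      have hcast : ((2 * n + 1 : ℕ) : F) = ((2 * r0 : ℕ) : F) := by
        push_cast
        linear_combination h'
      have := Nat.cast_injective hcast
      omega
    have hrk0 : ∀ n : ℕ, trkR (((n : F) + 2⁻¹) • oneT) = 0 := by
      intro n
      have hempty : {r0 : ℕ | ∃ v : Fin r0 → Fin 0 → Fin m → F,
          ((n : F) + 2⁻¹) • oneT = ∑ i, ⨂ₜ[F] j, v i j} = ∅ := by
        ext r0
        simp only [Set.mem_setOf_eq, Set.mem_empty_iff_false, iff_false]
        rintro ⟨v, hv⟩
        have h1 : ∀ i : Fin r0, (⨂ₜ[F] j, v i j) = oneT :=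
          fun i => congrArg (PiTensorProduct.tprod F) (funext fun j => j.elim0)
        rw [Finset.sum_congr rfl fun i _ => h1 i, Finset.sum_const, Finset.card_univ,
          Fintype.card_fin] at hv
        have h2 := congrArg L hv
        rw [map_smul, map_nsmul, honeT, hL] at h2
        rw [PiTensorProduct.isEmptyEquiv_apply_tprod] at h2
        rw [smul_eq_mul, mul_one, nsmul_eq_mul, mul_one] at h2
        exact hnotnat n r0 h2
      exact Nat.sInf_eq_zero.mpr (Or.inr hempty)
    set Q : Polynomial F :=
      MvPolynomial.aeval (fun _ : Fin 0 → Fin m => (Polynomial.X : Polynomial F)) P with hQdef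
    have hroot : ∀ n : ℕ, Polynomial.IsRoot Q ((n : F) + 2⁻¹) := by
      intro n
      have hPv := hP (((n : F) + 2⁻¹) • oneT) (le_of_eq_of_le (hrk0 n) (Nat.zero_le _))
      have hco : (fun f : Fin 0 → Fin m => tcoord f (((n : F) + 2⁻¹) • oneT))
          = fun _ => ((n : F) + 2⁻¹) := by
        funext f
        rw [map_smul, honeT, tcoord_tprod]
        simp
      rw [hco] at hPv
      rw [Polynomial.IsRoot, hQdef, eval_aeval_mv]
      simpa using hPv
    have hQ0 : Q = 0 := by
      apply Polynomial.eq_zero_of_infinite_isRoot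
      apply Set.infinite_of_injective_forall_mem (f := fun n : ℕ => (n : F) + 2⁻¹)
      · intro n1 n2 h
        have h2 := add_left_injective (2⁻¹ : F) h
        exact Nat.cast_injective h2
      · intro n
        exact hroot n
    have hfun : (fun f : Fin 0 → Fin m => tcoord f (φ v))
        = fun _ => tcoord (fun j => j.elim0) (φ v) := by
      funext f
      have hf : f = fun j => j.elim0 := funext fun j => j.elim0
      rw [hf]
    rw [hfun]
    have := congrArg (Polynomial.eval (tcoord (fun j => j.elim0) (φ v))) hQ0
    rw [eval_aeval_mv, Polynomial.eval_zero] at this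
    simpa using this
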